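/- Let Q₁, Q₂ be positive semidefinite d×d real matrices whose blocks (Q₁)_uu and (Q₂)_uu are positive definite (so the uu-block of Q₁+Q₂ is also positive definite). Then π(Q₁ + Q₂) ≥ π(Q₁) + π(Q₂) in the Loewner order. -/

import Mathlib

open MeasureTheory Matrix Filter ProbabilityTheory
open scoped ENNReal NNReal

noncomputable section

instance matrixMeasurableSpace {I J : Type*} : MeasurableSpace (Matrix I J ℝ) :=
  inferInstanceAs (MeasurableSpace (I → J → ℝ))

/-- The Schur-complement map `π(P) = P_xx − P_xu P_uu⁻¹ P_ux`. -/
def piMap {n m : ℕ} (P : Matrix (Fin n ⊕ Fin m) (Fin n ⊕ Fin m) ℝ) :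
    Matrix (Fin n) (Fin n) ℝ :=
  P.toBlocks₁₁ - P.toBlocks₁₂ * P.toBlocks₂₂⁻¹ * P.toBlocks₂₁

/-- The feedback-gain map `Γ(P) = −P_uu⁻¹ P_ux`. -/
def gammaMap {n m : ℕ} (P : Matrix (Fin n ⊕ Fin m) (Fin n ⊕ Fin m) ℝ) :
    Matrix (Fin m) (Fin n) ℝ :=
  -(P.toBlocks₂₂⁻¹ * P.toBlocks₂₁)

/-- Loewner order: `X ≤ Y` iff `Y - X` is positive semidefinite. -/
def loewnerLE {I : Type*} [Fintype I] (X Y : Matrix I I ℝ) : Prop :=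
  (Y - X).PosSemidef

/-- Spectral norm (`2`-norm) of a real matrix. -/
def specNorm {I J : Type*} [Fintype I] [Fintype J] [DecidableEq J]
    (M : Matrix I J ℝ) : ℝ :=
  ‖LinearMap.toContinuousLinearMap (Matrix.toEuclideanLin M)‖

/-- Entrywise expectation of a random matrix. -/
def matExp {Ω : Type*} [MeasurableSpace Ω] (μpr : Measure Ω) {I J : Type*}
    (M : Ω → Matrix I J ℝ) : Matrix I J ℝ :=
  Matrix.of fun i j => ∫ ω, M ω i j ∂μpr

section Aux

open scoped Matrix

lemma toBlocks₂₁_eq_conjTranspose {n m : ℕ} {Q : Matrix (Fin n ⊕ Fin m) (Fin n ⊕ Fin m) ℝ}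
    (hQ : Q.IsHermitian) : Q.toBlocks₂₁ = Q.toBlocks₁₂ᴴ := by
  ext i j
  have := congrFun (congrFun hQ.eq (Sum.inr i)) (Sum.inl j)
  simpa [Matrix.toBlocks₂₁, Matrix.toBlocks₁₂, Matrix.conjTranspose_apply] using this.symm

lemma piMap_isHermitian {n m : ℕ} {Q : Matrix (Fin n ⊕ Fin m) (Fin n ⊕ Fin m) ℝ}
    (hQ : Q.IsHermitian) : (piMap Q).IsHermitian := by
  have hA : Q.toBlocks₁₁.IsHermitian := by
    ext i j
    have := congrFun (congrFun hQ.eq (Sum.inl i)) (Sum.inl j)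
    simpa [Matrix.toBlocks₁₁, Matrix.conjTranspose_apply] using this
  have hD : Q.toBlocks₂₂.IsHermitian := by
    ext i j
    have := congrFun (congrFun hQ.eq (Sum.inr i)) (Sum.inr j)
    simpa [Matrix.toBlocks₂₂, Matrix.conjTranspose_apply] using this
  rw [piMap, toBlocks₂₁_eq_conjTranspose hQ]
  exact hA.sub (Matrix.isHermitian_mul_mul_conjTranspose _ hD.inv)

/-- The quadratic form bound: `x ⬝ π(Q) x ≤ (x ⊕ y) ⬝ Q (x ⊕ y)` for any `y`. -/
lemma piMap_quad_le {n m : ℕ} {Q : Matrix (Fin n ⊕ Fin m) (Fin n ⊕ Fin m) ℝ}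
    (hQ : Q.PosSemidef) (huu : Q.toBlocks₂₂.PosDef) (x : Fin n → ℝ) (y : Fin m → ℝ) :
    x ⬝ᵥ piMap Q *ᵥ x ≤ Sum.elim x y ⬝ᵥ Q *ᵥ Sum.elim x y := by
  haveI : Invertible Q.toBlocks₂₂ := huu.isUnit.invertible
  have hB := toBlocks₂₁_eq_conjTranspose hQ.1
  have hblocks : Q = Matrix.fromBlocks Q.toBlocks₁₁ Q.toBlocks₁₂ Q.toBlocks₁₂ᴴ Q.toBlocks₂₂ := by
    rw [← hB, Matrix.fromBlocks_toBlocks]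
  have key := Matrix.schur_complement_eq₂₂ (α := ℝ) Q.toBlocks₁₁ Q.toBlocks₁₂
    (D := Q.toBlocks₂₂) x y huu.1
  calc x ⬝ᵥ piMap Q *ᵥ x
      = star x ᵥ* (Q.toBlocks₁₁ - Q.toBlocks₁₂ * Q.toBlocks₂₂⁻¹ * Q.toBlocks₁₂ᴴ) ⬝ᵥ x := by
        rw [piMap, hB, star_trivial, Matrix.dotProduct_mulVec]
    _ ≤ star ((Q.toBlocks₂₂⁻¹ * Q.toBlocks₁₂ᴴ) *ᵥ x + y) ᵥ* Q.toBlocks₂₂ ⬝ᵥ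
          ((Q.toBlocks₂₂⁻¹ * Q.toBlocks₁₂ᴴ) *ᵥ x + y) +
        star x ᵥ* (Q.toBlocks₁₁ - Q.toBlocks₁₂ * Q.toBlocks₂₂⁻¹ * Q.toBlocks₁₂ᴴ) ⬝ᵥ x := by
        refine le_add_of_nonneg_left ?_
        rw [← Matrix.dotProduct_mulVec]
        exact huu.posSemidef.dotProduct_mulVec_nonneg _
    _ = star (Sum.elim x y) ᵥ* Matrix.fromBlocks Q.toBlocks₁₁ Q.toBlocks₁₂ Q.toBlocks₁₂ᴴ
          Q.toBlocks₂₂ ⬝ᵥ Sum.elim x y := key.symm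
    _ = Sum.elim x y ⬝ᵥ Q *ᵥ Sum.elim x y := by
        rw [← hblocks, star_trivial, Matrix.dotProduct_mulVec]

/-- Equality at the optimal `y`. -/
lemma piMap_quad_eq {n m : ℕ} {Q : Matrix (Fin n ⊕ Fin m) (Fin n ⊕ Fin m) ℝ}
    (hQ : Q.IsHermitian) (huu : Q.toBlocks₂₂.PosDef) (x : Fin n → ℝ) :
    Sum.elim x (-((Q.toBlocks₂₂⁻¹ * Q.toBlocks₁₂ᴴ) *ᵥ x)) ⬝ᵥ
        Q *ᵥ Sum.elim x (-((Q.toBlocks₂₂⁻¹ * Q.toBlocks₁₂ᴴ) *ᵥ x)) =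
      x ⬝ᵥ piMap Q *ᵥ x := by
  haveI : Invertible Q.toBlocks₂₂ := huu.isUnit.invertible
  have hB := toBlocks₂₁_eq_conjTranspose hQ
  have hD : Q.toBlocks₂₂.IsHermitian := huu.1
  have hblocks : Q = Matrix.fromBlocks Q.toBlocks₁₁ Q.toBlocks₁₂ Q.toBlocks₁₂ᴴ Q.toBlocks₂₂ := by
    rw [← hB, Matrix.fromBlocks_toBlocks]
  have key := Matrix.schur_complement_eq₂₂ (α := ℝ) Q.toBlocks₁₁ Q.toBlocks₁₂
    (D := Q.toBlocks₂₂) x (-((Q.toBlocks₂₂⁻¹ * Q.toBlocks₁₂ᴴ) *ᵥ x)) hD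
  rw [add_neg_cancel] at key
  calc Sum.elim x (-((Q.toBlocks₂₂⁻¹ * Q.toBlocks₁₂ᴴ) *ᵥ x)) ⬝ᵥ
        Q *ᵥ Sum.elim x (-((Q.toBlocks₂₂⁻¹ * Q.toBlocks₁₂ᴴ) *ᵥ x))
      = star (Sum.elim x (-((Q.toBlocks₂₂⁻¹ * Q.toBlocks₁₂ᴴ) *ᵥ x))) ᵥ*
          Matrix.fromBlocks Q.toBlocks₁₁ Q.toBlocks₁₂ Q.toBlocks₁₂ᴴ Q.toBlocks₂₂ ⬝ᵥ
          Sum.elim x (-((Q.toBlocks₂₂⁻¹ * Q.toBlocks₁₂ᴴ) *ᵥ x)) := by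
        rw [← hblocks, star_trivial, Matrix.dotProduct_mulVec]
    _ = x ⬝ᵥ piMap Q *ᵥ x := by
        rw [key, piMap, hB, star_trivial, Matrix.dotProduct_mulVec]
        simp

end Aux

/-- Superadditivity of `π`: `π(Q₁ + Q₂) ≥ π(Q₁) + π(Q₂)` in the Loewner order. -/
theorem piMap_superadditive {n m : ℕ}
    (Q₁ Q₂ : Matrix (Fin n ⊕ Fin m) (Fin n ⊕ Fin m) ℝ)
    (hQ₁ : Q₁.PosSemidef) (hQ₂ : Q₂.PosSemidef)
    (huu₁ : Q₁.toBlocks₂₂.PosDef) (huu₂ : Q₂.toBlocks₂₂.PosDef) :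
    loewnerLE (piMap Q₁ + piMap Q₂) (piMap (Q₁ + Q₂)) := by
  have hQ : (Q₁ + Q₂).PosSemidef := hQ₁.add hQ₂
  have huu : (Q₁ + Q₂).toBlocks₂₂.PosDef := by
    have : (Q₁ + Q₂).toBlocks₂₂ = Q₁.toBlocks₂₂ + Q₂.toBlocks₂₂ := rfl
    rw [this]
    exact huu₁.add_posSemidef huu₂.posSemidef
  refine Matrix.PosSemidef.of_dotProduct_mulVec_nonneg ?_ ?_
  · exact ((piMap_isHermitian hQ.1).sub
      ((piMap_isHermitian hQ₁.1).add (piMap_isHermitian hQ₂.1)))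
  · intro x
    rw [star_trivial]
    set y := -(((Q₁ + Q₂).toBlocks₂₂⁻¹ * (Q₁ + Q₂).toBlocks₁₂ᴴ) *ᵥ x) with hy
    have h1 : x ⬝ᵥ piMap Q₁ *ᵥ x ≤ Sum.elim x y ⬝ᵥ Q₁ *ᵥ Sum.elim x y :=
      piMap_quad_le hQ₁ huu₁ x y
    have h2 : x ⬝ᵥ piMap Q₂ *ᵥ x ≤ Sum.elim x y ⬝ᵥ Q₂ *ᵥ Sum.elim x y :=
      piMap_quad_le hQ₂ huu₂ x y
    have heq : Sum.elim x y ⬝ᵥ (Q₁ + Q₂) *ᵥ Sum.elim x y = x ⬝ᵥ piMap (Q₁ + Q₂) *ᵥ x :=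
      piMap_quad_eq hQ.1 huu x
    have hsplit : Sum.elim x y ⬝ᵥ (Q₁ + Q₂) *ᵥ Sum.elim x y =
        Sum.elim x y ⬝ᵥ Q₁ *ᵥ Sum.elim x y + Sum.elim x y ⬝ᵥ Q₂ *ᵥ Sum.elim x y := by
      rw [Matrix.add_mulVec, dotProduct_add]
    have : x ⬝ᵥ piMap Q₁ *ᵥ x + x ⬝ᵥ piMap Q₂ *ᵥ x ≤ x ⬝ᵥ piMap (Q₁ + Q₂) *ᵥ x := by
      rw [← heq, hsplit]; exact add_le_add h1 h2
    have hexp : x ⬝ᵥ (piMap (Q₁ + Q₂) - (piMap Q₁ + piMap Q₂)) *ᵥ x =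
        x ⬝ᵥ piMap (Q₁ + Q₂) *ᵥ x - (x ⬝ᵥ piMap Q₁ *ᵥ x + x ⬝ᵥ piMap Q₂ *ᵥ x) := by
      rw [Matrix.sub_mulVec, Matrix.add_mulVec, dotProduct_sub, dotProduct_add]
    rw [hexp]
    linarith

end
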